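/- The normalized volume of Q_n (with respect to the lattice ℤ^{n²} ∩ aff(Q_n), normalized so the standard simplex has volume 1) equals n. -/

import Mathlib

open Matrix Finset Pointwise

variable (n : ℕ) [NeZero n]

/-- Permutation matrix of `σ`: entries `δ_{i, σ(j)}`. -/
def permMat (σ : Equiv.Perm (ZMod n)) : Matrix (ZMod n) (ZMod n) ℝ :=
  Matrix.of fun i j => if i = σ j then 1 else 0

/-- Rotation `x ↦ x + 1` of the regular n-gon with vertex set `ZMod n`. -/
def rot : Equiv.Perm (ZMod n) := Equiv.addRight 1

/-- Reflection `x ↦ -x` of the regular n-gon. -/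
def rfl' : Equiv.Perm (ZMod n) := Equiv.neg (ZMod n)

/-- The dihedral group `D_n ≤ S_n`, symmetries of the regular n-gon. -/
def dihedral : Subgroup (Equiv.Perm (ZMod n)) := Subgroup.closure {rot n, rfl' n}

/-- Adjacency matrix of the n-cycle `C_n`. -/
def cycAdj : Matrix (ZMod n) (ZMod n) ℝ :=
  Matrix.of fun i j => if j = i + 1 ∨ j = i - 1 then 1 else 0

/-- The permutation polytope `DP_n = conv{M_σ : σ ∈ D_n} ⊆ ℝ^{n×n}`. -/
def DP : Set (Matrix (ZMod n) (ZMod n) ℝ) :=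
  convexHull ℝ {M | ∃ σ ∈ dihedral n, M = permMat n σ}

/-- The cyclic shift matrix `R`. -/
def Rmat : Matrix (ZMod n) (ZMod n) ℝ := Matrix.of fun i j => if j = i + 1 then 1 else 0

/-- The `2n` rows of `W = [[I,...,I],[I,R,...,R^{n-1}]]`, viewed as vectors in
`ℝ^{n²} = Matrix (ZMod n) (ZMod n) ℝ`; the first matrix coordinate is the block index. -/
def Wrow : Bool × ZMod n → Matrix (ZMod n) (ZMod n) ℝ
  | (false, k) => Matrix.of fun _ j => if j = k then 1 else 0
  | (true, k) => Matrix.of fun b j => (Rmat n ^ b.val) k j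

/-- The polytope `Q_n ⊆ ℝ^{n²}`. -/
def Qpoly : Set (Matrix (ZMod n) (ZMod n) ℝ) := convexHull ℝ (Set.range (Wrow n))

/-- A point of `ℝ^{n²}` is a lattice point if all its coordinates are integers. -/
def IsInt (x : Matrix (ZMod n) (ZMod n) ℝ) : Prop := ∀ b j, ∃ z : ℤ, x b j = (z : ℝ)

section QVAux

open Matrix Finset Filter

namespace QVAux

variable (n : ℕ) [NeZero n]

lemma Rpow_apply (t : ℕ) (k j : ZMod n) :
    (Rmat n ^ t) k j = if j = k + (t : ZMod n) then 1 else 0 := by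
  induction t generalizing j with
  | zero => simp [Matrix.one_apply, eq_comm]
  | succ t ih =>
    rw [pow_succ, Matrix.mul_apply]
    rw [Finset.sum_eq_single (k + (t : ZMod n))]
    · rw [ih, if_pos rfl, one_mul]
      show (if j = (k + (t : ZMod n)) + 1 then (1:ℝ) else 0) = _
      push_cast
      rw [add_assoc]
    · intro l _ hl
      rw [ih, if_neg hl, zero_mul]
    · simp
  
lemma Wrow_false_apply (k b j : ZMod n) :
    Wrow n (false, k) b j = if j = k then 1 else 0 := rfl

lemma Wrow_true_apply (k b j : ZMod n) :
    Wrow n (true, k) b j = if j = k + b then 1 else 0 := by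
  show (Rmat n ^ b.val) k j = _
  rw [Rpow_apply, ZMod.natCast_rightInverse b]

lemma sum_weights_entry (w : Bool × ZMod n → ℝ) (b j : ZMod n) :
    (∑ v, w v • Wrow n v) b j = w (false, j) + w (true, j - b) := by
  rw [Matrix.sum_apply]
  rw [Fintype.sum_prod_type]
  rw [Fintype.sum_bool]
  have h1 : ∀ k, (w (true, k) • Wrow n (true, k)) b j
      = if k = j - b then w (true, k) else 0 := by
    intro k
    rw [Matrix.smul_apply, Wrow_true_apply, smul_eq_mul]
    by_cases hk : k = j - b
    · subst hk; simp [sub_add_cancel]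
    · have : j ≠ k + b := fun h => hk (by rw [h]; ring)
      simp [this, hk]
  have h2 : ∀ k, (w (false, k) • Wrow n (false, k)) b j
      = if k = j then w (false, k) else 0 := by
    intro k
    rw [Matrix.smul_apply, Wrow_false_apply, smul_eq_mul]
    by_cases hk : k = j
    · subst hk; simp
    · simp [Ne.symm hk, hk]
  rw [Finset.sum_congr rfl (fun k _ => h1 k), Finset.sum_congr rfl (fun k _ => h2 k)]
  rw [Finset.sum_ite_eq' univ (j - b) (fun k => w (true, k)),
    Finset.sum_ite_eq' univ j (fun k => w (false, k))]
  simp [add_comm]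

lemma memQ_iff (x : Matrix (ZMod n) (ZMod n) ℝ) :
    x ∈ Qpoly n ↔ ∃ w : Bool × ZMod n → ℝ, (∀ v, 0 ≤ w v) ∧ ∑ v, w v = 1 ∧
      ∀ b j, x b j = w (false, j) + w (true, j - b) := by
  constructor
  · intro hx
    rw [Qpoly, convexHull_range_eq_exists_affineCombination] at hx
    obtain ⟨s, w, h0, h1, hx⟩ := hx
    rw [Finset.affineCombination_eq_linear_combination _ _ _ h1] at hx
    refine ⟨fun v => if v ∈ s then w v else 0, fun v => ?_, ?_, fun b j => ?_⟩
    · by_cases hv : v ∈ s <;> simp [hv, h0 v]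
    · rw [Finset.sum_ite_mem, Finset.univ_inter, h1]
    · rw [← hx]
      have := sum_weights_entry n (fun v => if v ∈ s then w v else 0) b j
      rw [← this]
      rw [Matrix.sum_apply, Matrix.sum_apply]
      rw [← Finset.sum_subset (Finset.subset_univ s)]
      · exact Finset.sum_congr rfl fun v hv => by simp [hv]
      · intro v _ hv
        simp [hv]
  · rintro ⟨w, h0, h1, hx⟩
    refine mem_convexHull_of_exists_fintype w (Wrow n) h0 h1 (fun v => Set.mem_range_self v) ?_
    ext b j
    rw [sum_weights_entry, ← hx]

lemma lattice_char (m : ℕ) (hm : m ≠ 0) (x : Matrix (ZMod n) (ZMod n) ℝ) :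
    (x ∈ (m : ℝ) • Qpoly n ∧ IsInt n x) ↔ ∃ f : ZMod n ⊕ ZMod n → ℕ,
      (∑ v, f v = m) ∧ (∃ j, f (Sum.inl j) = 0) ∧
      (∀ b j, x b j = (f (Sum.inl j) : ℝ) + (f (Sum.inr (j - b)) : ℝ)) := by
  have hm' : (0:ℝ) < m := by exact_mod_cast Nat.pos_of_ne_zero hm
  constructor
  · rintro ⟨⟨y, hy, rfl⟩, hint⟩
    rw [memQ_iff] at hy
    obtain ⟨w, h0, h1, hyy⟩ := hy
    set lam : ZMod n → ℝ := fun j => m * w (false, j) with hlam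
    set mu : ZMod n → ℝ := fun k => m * w (true, k) with hmu
    have hx : ∀ b j, ((m:ℝ) • y) b j = lam j + mu (j - b) := by
      intro b j
      simp only [Matrix.smul_apply, smul_eq_mul, hyy b j, mul_add, hlam, hmu]
    have hlam0 : ∀ j, 0 ≤ lam j := fun j => mul_nonneg hm'.le (h0 _)
    have hmu0 : ∀ k, 0 ≤ mu k := fun k => mul_nonneg hm'.le (h0 _)
    have hsum : (∑ j, lam j) + (∑ k, mu k) = m := by
      rw [hlam, hmu, ← Finset.mul_sum, ← Finset.mul_sum, ← mul_add]
      rw [Fintype.sum_prod_type, Fintype.sum_bool] at h1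
      rw [add_comm] at h1
      rw [h1, mul_one]
    have hint2 : ∀ i j : ZMod n, ∃ z : ℤ, lam j + mu i = z := by
      intro i j
      obtain ⟨z, hz⟩ := hint (j - i) j
      refine ⟨z, ?_⟩
      have hz' : ((m:ℝ) • y) (j - i) j = (z:ℝ) := hz
      rw [hx (j - i) j, sub_sub_cancel] at hz'
      exact hz'
    obtain ⟨j0, -, hj0⟩ := Finset.exists_min_image Finset.univ lam ⟨0, Finset.mem_univ 0⟩
    have hp : ∀ j, ∃ a : ℕ, lam j - lam j0 = a := by
      intro j
      obtain ⟨z1, hz1⟩ := hint2 0 j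
      obtain ⟨z2, hz2⟩ := hint2 0 j0
      have hz : lam j - lam j0 = ((z1 - z2 : ℤ) : ℝ) := by
        push_cast
        rw [← hz1, ← hz2]; ring
      have hge : (0:ℤ) ≤ z1 - z2 := by
        have h := hj0 j (Finset.mem_univ j)
        have : (0:ℝ) ≤ ((z1 - z2 : ℤ) : ℝ) := by rw [← hz]; linarith
        exact_mod_cast this
      refine ⟨(z1 - z2).toNat, ?_⟩
      rw [hz]
      exact_mod_cast (Int.toNat_of_nonneg hge).symm
    have hq : ∀ i, ∃ c : ℕ, mu i + lam j0 = c := by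
      intro i
      obtain ⟨z, hz⟩ := hint2 i j0
      have hge : (0:ℤ) ≤ z := by
        have : (0:ℝ) ≤ (z:ℝ) := by rw [← hz]; linarith [hlam0 j0, hmu0 i]
        exact_mod_cast this
      refine ⟨z.toNat, ?_⟩
      rw [add_comm, hz]
      exact_mod_cast (Int.toNat_of_nonneg hge).symm
    choose p hp using hp
    choose q hq using hq
    refine ⟨Sum.elim p q, ?_, ⟨j0, ?_⟩, ?_⟩
    · have key : ((∑ v, Sum.elim p q v : ℕ) : ℝ) = ((m:ℕ) : ℝ) := by
        push_cast
        rw [Fintype.sum_sum_type]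
        simp only [Sum.elim_inl, Sum.elim_inr]
        have e1 : (∑ j, (p j : ℝ)) = ∑ j, (lam j - lam j0) :=
          Finset.sum_congr rfl fun j _ => (hp j).symm
        have e2 : (∑ i, (q i : ℝ)) = ∑ i, (mu i + lam j0) :=
          Finset.sum_congr rfl fun i _ => (hq i).symm
        push_cast at e1 e2 ⊢
        rw [e1, e2, Finset.sum_sub_distrib, Finset.sum_add_distrib]
        rw [← hsum]; ring
      exact Nat.cast_injective key
    · have h0' : (p j0 : ℝ) = 0 := by rw [← hp j0]; ring
      exact_mod_cast h0'
    · intro b j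
      show ((m:ℝ) • y) b j = _
      rw [hx b j, Sum.elim_inl, Sum.elim_inr, ← hp j, ← hq (j - b)]
      ring
  · rintro ⟨f, hsum, -, hf⟩
    have hmne : (m:ℝ) ≠ 0 := ne_of_gt hm'
    constructor
    · set y : Matrix (ZMod n) (ZMod n) ℝ :=
        Matrix.of fun b j => (f (Sum.inl j) : ℝ)/m + (f (Sum.inr (j-b)) : ℝ)/m with hy
      have hyQ : y ∈ Qpoly n := by
        rw [memQ_iff]
        refine ⟨fun v => (f (cond v.1 (Sum.inr v.2) (Sum.inl v.2)) : ℝ)/m, fun v => ?_, ?_, ?_⟩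
        · positivity
        · rw [Fintype.sum_prod_type, Fintype.sum_bool]
          simp only [cond_true, cond_false]
          rw [← Finset.sum_div, ← Finset.sum_div, ← add_div, div_eq_one_iff_eq hmne]
          rw [← Nat.cast_sum, ← Nat.cast_sum, ← Nat.cast_add, ← hsum]
          rw [Fintype.sum_sum_type]
          push_cast
          ring
        · intro b j
          simp only [hy, Matrix.of_apply, cond_true, cond_false]
      have hxy : x = (m:ℝ) • y := by
        ext b j
        rw [Matrix.smul_apply, smul_eq_mul, hy, Matrix.of_apply, hf b j]
        field_simp
      rw [hxy]
      exact Set.smul_mem_smul_set hyQ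
    · intro b j
      exact ⟨f (Sum.inl j) + f (Sum.inr (j - b)), by rw [hf b j]; push_cast; ring⟩

def Sfin (m : ℕ) : Finset ((ZMod n ⊕ ZMod n) → ℕ) :=
  (Finset.piAntidiag Finset.univ m).filter fun f => ∃ j, f (Sum.inl j) = 0

def Fmap (f : (ZMod n ⊕ ZMod n) → ℕ) : Matrix (ZMod n) (ZMod n) ℝ :=
  Matrix.of fun b j => (f (Sum.inl j) : ℝ) + (f (Sum.inr (j - b)) : ℝ)

lemma lattice_set_eq (m : ℕ) (hm : m ≠ 0) :
    {x | x ∈ (m : ℝ) • Qpoly n ∧ IsInt n x} = ↑((Sfin n m).image (Fmap n)) := by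
  ext x
  simp only [Set.mem_setOf_eq, lattice_char n m hm, Finset.coe_image, Set.mem_image,
    Finset.mem_coe, Sfin, Finset.mem_filter, Finset.mem_piAntidiag]
  constructor
  · rintro ⟨f, hsum, hex, hval⟩
    refine ⟨f, ⟨⟨hsum, fun i _ => Finset.mem_univ i⟩, hex⟩, ?_⟩
    ext b j
    exact (hval b j).symm
  · rintro ⟨f, ⟨⟨hsum, -⟩, hex⟩, rfl⟩
    exact ⟨f, hsum, hex, fun b j => rfl⟩

lemma Fmap_injOn (m : ℕ) : Set.InjOn (Fmap n) ↑(Sfin n m) := by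
  intro f hf g hg hfg
  simp only [Sfin, Finset.coe_filter, Set.mem_setOf_eq, Finset.mem_piAntidiag] at hf hg
  obtain ⟨-, j1, hj1⟩ := hf
  obtain ⟨-, j2, hj2⟩ := hg
  have key : ∀ i j : ZMod n, f (Sum.inl j) + f (Sum.inr i) = g (Sum.inl j) + g (Sum.inr i) := by
    intro i j
    have h := congrFun (congrFun hfg (j - i)) j
    simp only [Fmap, Matrix.of_apply, sub_sub_cancel] at h
    exact_mod_cast h
  have hr : ∀ i, f (Sum.inr i) = g (Sum.inr i) := by
    intro i
    have h1 := key i j2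
    have h2 := key i j1
    omega
  have hl : ∀ j, f (Sum.inl j) = g (Sum.inl j) := by
    intro j
    have h1 := key 0 j
    have h2 := hr 0
    omega
  funext v
  cases v with
  | inl j => exact hl j
  | inr i => exact hr i

lemma card_piAntidiag_univ (ι : Type) [Fintype ι] [DecidableEq ι] (m : ℕ) :
    (Finset.piAntidiag (Finset.univ : Finset ι) m).card
      = (Fintype.card ι + m - 1).choose m := by
  classical
  rw [← Fintype.card_coe, ← Sym.card_sym_eq_choose]
  apply Fintype.card_congr
  refine Equiv.trans ?_ (Sym.equivNatSumOfFintype ι m).symm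
  exact Equiv.subtypeEquivRight fun f => by simp

lemma sum_elim_one_zero : (∑ v : ZMod n ⊕ ZMod n, Sum.elim (fun _ => 1) (fun _ => 0) v) = n := by
  rw [Fintype.sum_sum_type]
  simp [ZMod.card]

lemma card_Sfin (m : ℕ) :
    (Sfin n m).card = (m + 2*n - 1).choose (2*n - 1) - (m + n - 1).choose (2*n - 1) := by
  classical
  have hn1 : 1 ≤ n := Nat.one_le_iff_ne_zero.2 (NeZero.ne n)
  have hcardsum : Fintype.card (ZMod n ⊕ ZMod n) = 2 * n := by
    simp [ZMod.card]; ring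
  have htot := card_piAntidiag_univ (ZMod n ⊕ ZMod n) m
  rw [hcardsum] at htot
  have htot' : (Finset.piAntidiag (Finset.univ : Finset (ZMod n ⊕ ZMod n)) m).card
      = (m + 2*n - 1).choose (2*n - 1) := by
    rw [htot, show 2*n + m - 1 = m + 2*n - 1 by clear * - hn1; omega,
      show 2*n - 1 = (m + 2*n - 1) - m by clear * - hn1; omega]
    exact (Nat.choose_symm (by clear * - hn1; omega)).symm
  have hsplit := Finset.card_filter_add_card_filter_not
      (s := Finset.piAntidiag (Finset.univ : Finset (ZMod n ⊕ ZMod n)) m)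
      (p := fun f => ∃ j, f (Sum.inl j) = 0)
  by_cases hmn : n ≤ m
  · have hcompl : ((Finset.piAntidiag (Finset.univ : Finset (ZMod n ⊕ ZMod n)) m).filter
        fun f => ¬∃ j, f (Sum.inl j) = 0).card
        = (Finset.piAntidiag (Finset.univ : Finset (ZMod n ⊕ ZMod n)) (m - n)).card := by
      refine Finset.card_nbij' (fun f v => f v - Sum.elim (fun _ => 1) (fun _ => 0) v)
        (fun g v => g v + Sum.elim (fun _ => 1) (fun _ => 0) v) ?_ ?_ ?_ ?_
      · intro f hf
        simp only [Finset.mem_coe, Finset.mem_filter, Finset.mem_piAntidiag, not_exists] at hf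
        obtain ⟨⟨hfs, -⟩, hfn⟩ := hf
        simp only [Finset.mem_coe, Finset.mem_piAntidiag]
        refine ⟨?_, fun i _ => Finset.mem_univ i⟩
        rw [Finset.sum_tsub_distrib]
        · rw [hfs, sum_elim_one_zero]
        · intro v _
          cases v with
          | inl j => simpa using Nat.one_le_iff_ne_zero.2 (hfn j)
          | inr i => simp
      · intro g hg
        simp only [Finset.mem_coe, Finset.mem_piAntidiag] at hg
        obtain ⟨hgs, -⟩ := hg
        simp only [Finset.mem_coe, Finset.mem_filter, Finset.mem_piAntidiag, not_exists]
        refine ⟨⟨?_, fun i _ => Finset.mem_univ i⟩, fun j => by simp⟩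
        rw [Finset.sum_add_distrib, hgs, sum_elim_one_zero]
        exact Nat.sub_add_cancel hmn
      · intro f hf
        simp only [Finset.mem_coe, Finset.mem_filter, not_exists] at hf
        funext v
        cases v with
        | inl j => simp [Nat.sub_add_cancel (Nat.one_le_iff_ne_zero.2 (hf.2 j))]
        | inr i => simp
      · intro g _
        funext v
        cases v with
        | inl j => simp
        | inr i => simp
    have hrest : (Finset.piAntidiag (Finset.univ : Finset (ZMod n ⊕ ZMod n)) (m - n)).card
        = (m + n - 1).choose (2*n - 1) := by
      rw [card_piAntidiag_univ, hcardsum,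
        show 2*n + (m - n) - 1 = m + n - 1 by clear * - hn1 hmn; omega,
        show 2*n - 1 = (m + n - 1) - (m - n) by clear * - hn1 hmn; omega]
      exact (Nat.choose_symm (by clear * - hn1 hmn; omega)).symm
    show (Finset.filter _ _).card = _
    rw [← htot', ← hsplit, ← hrest, ← hcompl]
    exact (Nat.add_sub_cancel _ _).symm
  · have hcompl : ((Finset.piAntidiag (Finset.univ : Finset (ZMod n ⊕ ZMod n)) m).filter
        fun f => ¬∃ j, f (Sum.inl j) = 0).card = 0 := by
      rw [Finset.card_eq_zero, Finset.eq_empty_iff_forall_notMem]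
      intro f hf
      simp only [Finset.mem_filter, Finset.mem_piAntidiag, not_exists] at hf
      obtain ⟨⟨hfs, -⟩, hfn⟩ := hf
      have hge : n ≤ m := by
        calc n = ∑ v : ZMod n ⊕ ZMod n, Sum.elim (fun _ => 1) (fun _ => 0) v :=
              (sum_elim_one_zero n).symm
        _ ≤ ∑ v : ZMod n ⊕ ZMod n, f v := by
              apply Finset.sum_le_sum
              intro v _
              cases v with
              | inl j => simpa using Nat.one_le_iff_ne_zero.2 (hfn j)
              | inr i => simp
        _ = m := hfs
      exact hmn hge
    have hz : (m + n - 1).choose (2*n - 1) = 0 :=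
      Nat.choose_eq_zero_of_lt (by clear * - hn1 hmn; omega)
    show (Finset.filter _ _).card = _
    rw [hz, Nat.sub_zero, ← htot', ← hsplit, hcompl]
    exact (Nat.add_zero _).symm

lemma choose_telescope (a k : ℕ) : ∀ s : ℕ,
    a.choose (k+1) + ∑ i ∈ Finset.range s, (a+i).choose k = (a+s).choose (k+1)
  | 0 => by simp
  | s+1 => by
    rw [Finset.sum_range_succ, ← add_assoc, choose_telescope a k s,
      show a + (s+1) = (a+s) + 1 from rfl, Nat.choose_succ_succ']
    omega

lemma card_Sfin_sum (m : ℕ) :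
    (Sfin n m).card = ∑ i ∈ Finset.range n, (m + n - 1 + i).choose (2*n - 2) := by
  have hn1 : 1 ≤ n := Nat.one_le_iff_ne_zero.2 (NeZero.ne n)
  rw [card_Sfin]
  have h := choose_telescope (m + n - 1) (2*n - 2) n
  rw [show 2*n - 2 + 1 = 2*n - 1 by omega, show m + n - 1 + n = m + 2*n - 1 by omega] at h
  omega

lemma aux_tendsto (a t : ℕ) :
    Filter.Tendsto (fun m : ℕ => ((m + a - t : ℕ) : ℝ) / (m : ℝ)) atTop (nhds 1) := by
  have h0 : Filter.Tendsto (fun m : ℕ => 1 + ((a:ℝ) - t)/m) atTop (nhds 1) := by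
    have h := tendsto_const_div_atTop_nhds_zero_nat ((a:ℝ) - t)
    simpa using tendsto_const_nhds.add h
  refine h0.congr' ?_
  filter_upwards [Filter.eventually_ge_atTop (t+1)] with m hm
  have hm0 : (m:ℝ) ≠ 0 := Nat.cast_ne_zero.2 (by omega)
  have hsub : ((m + a - t : ℕ) : ℝ) = (m:ℝ) + a - t := by
    have ht : t ≤ m + a := by omega
    push_cast [ht]
    ring
  rw [hsub]
  field_simp
  ring


end QVAux

end QVAux

/-- the normalized volume of `Q_n` equals `n`: the number of lattice points
of `m·Q_n`, multiplied by `(2n-2)!/m^{2n-2}`, tends to `n` as `m → ∞`. -/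
theorem Q_normalized_volume (n : ℕ) [NeZero n] (hn : 3 ≤ n) :
    Filter.Tendsto (fun m : ℕ =>
      ((2 * n - 2).factorial : ℝ) *
        ({x | x ∈ (m : ℝ) • Qpoly n ∧ IsInt n x}.ncard : ℝ) / (m : ℝ) ^ (2 * n - 2))
      Filter.atTop (nhds (n : ℝ)) := by
  classical
  have hn1 : 1 ≤ n := by omega
  have key : Filter.Tendsto (fun m : ℕ => ∑ i ∈ Finset.range n,
      ∏ t ∈ Finset.range (2*n-2), ((m + (n - 1 + i) - t : ℕ) : ℝ) / (m : ℝ))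
      Filter.atTop (nhds (n : ℝ)) := by
    have h := tendsto_finset_sum (Finset.range n)
      (fun i (_ : i ∈ Finset.range n) => tendsto_finset_prod (Finset.range (2*n-2))
        (fun t (_ : t ∈ Finset.range (2*n-2)) => QVAux.aux_tendsto (n - 1 + i) t))
    simpa using h
  refine key.congr' ?_
  filter_upwards [Filter.eventually_ge_atTop 1] with m hm
  have hm0 : m ≠ 0 := by omega
  have hncard : {x | x ∈ (m:ℝ) • Qpoly n ∧ IsInt n x}.ncard
      = (QVAux.Sfin n m).card := by
    rw [QVAux.lattice_set_eq n m hm0, Set.ncard_coe_finset,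
      Finset.card_image_of_injOn (QVAux.Fmap_injOn n m)]
  rw [hncard, QVAux.card_Sfin_sum n m]
  rw [Nat.cast_sum, Finset.mul_sum, Finset.sum_div]
  refine Finset.sum_congr rfl fun i _ => ?_
  rw [show (∏ t ∈ Finset.range (2*n-2), ((m + (n-1+i) - t : ℕ):ℝ)/(m:ℝ))
      = ∏ t ∈ Finset.range (2*n-2), ((m + n - 1 + i - t : ℕ):ℝ)/(m:ℝ) from
    Finset.prod_congr rfl fun t _ => by rw [show m + (n-1+i) = m + n - 1 + i by omega]]
  have hfac : ((2*n-2).factorial : ℝ) * ((m+n-1+i).choose (2*n-2) : ℝ)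
      = ((m+n-1+i).descFactorial (2*n-2) : ℝ) := by
    rw [Nat.descFactorial_eq_factorial_mul_choose]
    push_cast
    ring
  rw [hfac, Nat.descFactorial_eq_prod_range, Nat.cast_prod,
    show ((m:ℝ))^(2*n-2) = ∏ _t ∈ Finset.range (2*n-2), (m:ℝ) by
      rw [Finset.prod_const, Finset.card_range],
    ← Finset.prod_div_distrib]
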